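/- Let α, β be real numbers with 0 < α < β. Then for every ε > 0 there exists M > 0 such that for all μ > M, every nonreal complex root λ of p_μ(λ) = αλ³ + λ² + βμλ + μ with Im(λ) > 0 satisfies |Im(λ) − √(β/α)·√μ| < ε·√μ. (That is, Im(λ) = √(β/α)·√μ + o(√μ) as μ → ∞.) -/

import Mathlib

set_option maxHeartbeats 1000000


/-- For `0 < α < β`: for every `ε > 0` there exists `M > 0` such that
for all `μ > M`, every nonreal root `λ` of `αλ³ + λ² + βμλ + μ` with `Im(λ) > 0`
satisfies `|Im(λ) − √(β/α)·√μ| < ε·√μ`. -/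
theorem stmt_12 (α β : ℝ) (hα : 0 < α) (hαβ : α < β) :
    ∀ ε > 0, ∃ M > 0, ∀ μ : ℝ, μ > M → ∀ z : ℂ, 0 < z.im →
      (α : ℂ) * z ^ 3 + z ^ 2 + (β : ℂ) * (μ : ℂ) * z + (μ : ℂ) = 0 →
      |z.im - Real.sqrt (β / α) * Real.sqrt μ| < ε * Real.sqrt μ := by
  intro ε hε
  have hβ : 0 < β := hα.trans hαβ
  set B : ℝ := (β - α) / (2 * α * β) with hB
  have hBpos : 0 < B := div_pos (by linarith) (by positivity)
  set C : ℝ := 3 * B ^ 2 + 2 * B / α with hC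
  have hCpos : 0 < C := by positivity
  have hαC : α * C = 3 * α * B ^ 2 + 2 * B := by rw [hC, mul_add, mul_div_assoc', mul_div_cancel_left₀ _ hα.ne']; ring
  set s : ℝ := Real.sqrt (β / α) with hs
  have hspos : 0 < s := Real.sqrt_pos.mpr (by positivity)
  have hs2 : s ^ 2 = β / α := Real.sq_sqrt (by positivity)
  refine ⟨max 1 (C / (ε * s)), lt_max_of_lt_left one_pos, ?_⟩
  intro μ hμ z hy hz
  have hμ1 : (1 : ℝ) < μ := lt_of_le_of_lt (le_max_left _ _) hμ
  have hμ0 : 0 < μ := by linarith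
  have hμC : C / (ε * s) < μ := lt_of_le_of_lt (le_max_right _ _) hμ
  have hμC' : C < ε * s * μ := by
    rw [div_lt_iff₀ (by positivity)] at hμC
    nlinarith [hμC]
  set x := z.re with hx
  set y := z.im with hyd
  have him := congrArg Complex.im hz
  have hre := congrArg Complex.re hz
  simp [Complex.add_im, Complex.add_re, Complex.mul_im, Complex.mul_re, pow_succ] at him hre
  have hIm : α * (3 * x ^ 2 * y - y ^ 3) + 2 * x * y + β * μ * y = 0 := by
    ring_nf at him ⊢; linarith [him]
  have hRe : α * (x ^ 3 - 3 * x * y ^ 2) + x ^ 2 - y ^ 2 + β * μ * x + μ = 0 := by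
    ring_nf at hre ⊢; linarith [hre]
  clear him hre hz
  have hy0 : y ≠ 0 := ne_of_gt hy
  have hE1 : α * y ^ 2 = 3 * α * x ^ 2 + 2 * x + β * μ := by
    have h2 : (α * (3 * x ^ 2 - y ^ 2) + 2 * x + β * μ) * y = 0 := by
      linear_combination hIm
    rcases mul_eq_zero.mp h2 with h | h
    · linear_combination -h
    · exact absurd h hy0
  have hKey : 8 * α ^ 2 * x ^ 3 + 8 * α * x ^ 2 + 2 * (α * β * μ + 1) * x
      + μ * (β - α) = 0 := by
    linear_combination (-α) * hRe + (-(3 * α * x) - 1) * hE1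
  have hxle : x ≤ 0 := by
    by_contra h
    push_neg at h
    nlinarith [hKey, mul_pos hμ0 (sub_pos.mpr hαβ),
      mul_pos (mul_pos hα hα) (pow_pos h 3), mul_pos hα (pow_pos h 2),
      mul_pos (mul_pos (mul_pos hα hβ) hμ0) h]
  have hxge : -B ≤ x := by
    have hfac : μ * ((β - α) + 2 * α * β * x) = -2 * x * (2 * α * x + 1) ^ 2 := by
      linear_combination hKey
    have h1 : 0 ≤ -2 * x * (2 * α * x + 1) ^ 2 :=
      mul_nonneg (by linarith) (sq_nonneg _)
    have h2 : 0 ≤ (β - α) + 2 * α * β * x := by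
      by_contra h
      push_neg at h
      have : μ * (β - α + 2 * α * β * x) < 0 := mul_neg_of_pos_of_neg hμ0 (by linarith)
      linarith [hfac, h1]
    rw [hB, neg_le, le_div_iff₀ (by positivity)]
    linarith [h2]
  have hbound : |α * y ^ 2 - β * μ| ≤ α * C := by
    rw [abs_le, hαC]
    constructor
    · nlinarith [hE1, hxge, hBpos, sq_nonneg x, sq_nonneg B, hα.le]
    · nlinarith [hE1, hxle, hα.le,
        mul_nonneg (by linarith : (0:ℝ) ≤ B - x) (by linarith : (0:ℝ) ≤ B + x)]
  have hsμ : 0 < Real.sqrt μ := Real.sqrt_pos.mpr hμ0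
  have hμs : Real.sqrt μ ^ 2 = μ := Real.sq_sqrt hμ0.le
  set u : ℝ := s * Real.sqrt μ with hu
  have hupos : 0 < u := mul_pos hspos hsμ
  have hu2 : u ^ 2 = β / α * μ := by rw [hu, mul_pow, hs2, hμs]
  have hαu : α * u ^ 2 = β * μ := by
    rw [hu2]; field_simp
  have hb := abs_le.mp hbound
  have hy2u1 : y ^ 2 - u ^ 2 ≤ C := by nlinarith [hb.2, hαu, hα]
  have hy2u2 : u ^ 2 - y ^ 2 ≤ C := by nlinarith [hb.1, hαu, hα]
  have hss : Real.sqrt μ * Real.sqrt μ = μ := Real.mul_self_sqrt hμ0.le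
  have h4 : ε * Real.sqrt μ * u = ε * s * μ := by
    calc ε * Real.sqrt μ * u = ε * s * (Real.sqrt μ * Real.sqrt μ) := by rw [hu]; ring
    _ = ε * s * μ := by rw [hss]
  have hyu : 0 < y + u := add_pos hy hupos
  have hC_lt : C < ε * Real.sqrt μ * (y + u) := by
    have h5 : ε * Real.sqrt μ * (y + u) = ε * Real.sqrt μ * y + ε * Real.sqrt μ * u := by ring
    have h6 : 0 < ε * Real.sqrt μ * y := mul_pos (mul_pos hε hsμ) hy
    rw [h5, h4]
    linarith [hμC']
  rw [abs_sub_lt_iff]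
  constructor
  · rcases le_or_gt (y - u) 0 with h | h
    · have : 0 < ε * Real.sqrt μ := mul_pos hε hsμ
      linarith
    · have key : (y - u) * (y + u) ≤ C := by
        have e : (y - u) * (y + u) = y ^ 2 - u ^ 2 := by ring
        rw [e]; exact hy2u1
      have := lt_of_le_of_lt key hC_lt
      exact (mul_lt_mul_iff_left₀ hyu).mp this
  · rcases le_or_gt (u - y) 0 with h | h
    · have : 0 < ε * Real.sqrt μ := mul_pos hε hsμ
      linarith
    · have key : (u - y) * (y + u) ≤ C := by
        have e : (u - y) * (y + u) = u ^ 2 - y ^ 2 := by ring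
        rw [e]; exact hy2u2
      have := lt_of_le_of_lt key hC_lt
      exact (mul_lt_mul_iff_left₀ hyu).mp this
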